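/- Let V be a real inner product space, A = [[X,W],[Z,Y]] with entries in V, A* = [[Y,-W],[-Z,X]], and define (A,B) = g(X,V')g(Y,M) - g(W,K)g(Z,N). If ⟨A,A*⟩ = 0, (A,A*) = 0, and O(A) = 0, then g(X,Y) = g(W,W) = g(Z,Z) = g(Z,W), and in particular W = Z. -/

import Mathlib

open scoped RealInnerProductSpace
open Matrix

noncomputable def matIp {V : Type*} [NormedAddCommGroup V] [InnerProductSpace ℝ V]
    (A B : Matrix (Fin 2) (Fin 2) V) : ℝ :=
  ∑ i, ∑ j, ⟪A i j, B i j⟫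

noncomputable def Oform {V : Type*} [NormedAddCommGroup V] [InnerProductSpace ℝ V]
    (A : Matrix (Fin 2) (Fin 2) V) : ℝ :=
  ⟪A 0 0, A 1 1⟫ - ⟪A 1 0, A 0 1⟫

noncomputable def detForm {V : Type*} [NormedAddCommGroup V] [InnerProductSpace ℝ V]
    (A B : Matrix (Fin 2) (Fin 2) V) : ℝ :=
  ⟪A 0 0, B 0 0⟫ * ⟪A 1 1, B 1 1⟫ - ⟪A 0 1, B 0 1⟫ * ⟪A 1 0, B 1 0⟫

def mstar {V : Type*} [AddCommGroup V] (A : Matrix (Fin 2) (Fin 2) V) :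
    Matrix (Fin 2) (Fin 2) V :=
  !![A 1 1, -(A 0 1); -(A 1 0), A 0 0]

lemma aux_tw (t w z : ℝ) (h1 : t + -w + (-z + t) = 0) (h2 : t*t - w*z = 0) :
    t = w ∧ t = z := by
  have hzz : z = 2*t - w := by linarith
  have h2' : (t - w)^2 = 0 := by rw [hzz] at h2; ring_nf; ring_nf at h2; linarith
  have := sub_eq_zero.mp (sq_eq_zero_iff.mp h2')
  constructor <;> linarith

/-- If `⟨A,A*⟩ = 0`, `(A,A*) = 0` and `O(A) = 0`, then
`g(X,Y) = g(W,W) = g(Z,Z) = g(Z,W)` and in particular `W = Z`. -/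
theorem eq_entries_of_star_orthogonal {V : Type*} [NormedAddCommGroup V]
    [InnerProductSpace ℝ V] (X W Z Y : V)
    (h1 : matIp !![X, W; Z, Y] (mstar !![X, W; Z, Y]) = 0)
    (h2 : detForm !![X, W; Z, Y] (mstar !![X, W; Z, Y]) = 0)
    (h3 : Oform !![X, W; Z, Y] = 0) :
    ⟪X, Y⟫ = ⟪W, W⟫ ∧ ⟪X, Y⟫ = ⟪Z, Z⟫ ∧ ⟪X, Y⟫ = ⟪Z, W⟫ ∧ W = Z := by
  simp [matIp, mstar, detForm, Oform, Fin.sum_univ_two, inner_neg_right] at h1 h2 h3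
  have hc : ⟪Y, X⟫ = ⟪X, Y⟫ := real_inner_comm X Y
  rw [hc] at h1 h2
  simp only [← real_inner_self_eq_norm_sq] at h1 h2
  have hw : ⟪X, Y⟫ = ⟪W, W⟫ ∧ ⟪X, Y⟫ = ⟪Z, Z⟫ := aux_tw _ _ _ h1 h2
  refine ⟨hw.1, hw.2, by linarith, ?_⟩
  have : ‖W - Z‖ ^ 2 = 0 := by
    rw [← real_inner_self_eq_norm_sq, inner_sub_sub_self, real_inner_comm Z W]
    linarith
  have := pow_eq_zero_iff (n := 2) (by norm_num) |>.mp this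
  rw [← sub_eq_zero]
  exact norm_eq_zero.mp this
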